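/- For ε ∈ (0, 1/2], the inverse standard Gaussian CDF satisfies |Φ^{-1}(ε)| ≤ 2·√(log₂(1/(2ε))). -/

import Mathlib

open MeasureTheory Real Set

/-- The standard normal CDF `Φ(x) = ∫_{-∞}^x e^{-t²/2}/√(2π) dt`. -/
noncomputable def gaussCDF (x : ℝ) : ℝ :=
  ∫ t in Set.Iic x, Real.exp (-t ^ 2 / 2) / Real.sqrt (2 * Real.pi)

namespace GaussAux

noncomputable def f (t : ℝ) : ℝ := Real.exp (-t ^ 2 / 2) / Real.sqrt (2 * Real.pi)

lemma sqrt_pos : 0 < Real.sqrt (2 * Real.pi) :=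
  Real.sqrt_pos.mpr (by positivity)

lemma f_pos (t : ℝ) : 0 < f t := div_pos (Real.exp_pos _) sqrt_pos

lemma f_int : Integrable f := by
  have h := integrable_exp_neg_mul_sq (by norm_num : (0:ℝ) < 1/2)
  have he : ∀ t : ℝ, f t = Real.exp (-(1/2) * t ^ 2) * (Real.sqrt (2 * Real.pi))⁻¹ := by
    intro t
    rw [f, div_eq_mul_inv]
    congr 2
    ring
  rw [show f = fun t : ℝ => Real.exp (-(1/2) * t ^ 2) * (Real.sqrt (2 * Real.pi))⁻¹ from funext he]
  exact h.mul_const _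

lemma f_even (t : ℝ) : f (-t) = f t := by simp [f]

lemma f_total : ∫ t, f t = 1 := by
  have he : ∀ t : ℝ, f t = Real.exp (-(1/2) * t ^ 2) * (Real.sqrt (2 * Real.pi))⁻¹ := by
    intro t
    rw [f, div_eq_mul_inv]
    congr 2
    ring
  simp_rw [he]
  rw [integral_mul_const, integral_gaussian]
  rw [show Real.pi / (1/2) = 2 * Real.pi by ring]
  exact mul_inv_cancel₀ (ne_of_gt sqrt_pos)

lemma f_Iic_zero : ∫ t in Iic (0:ℝ), f t = 1/2 := by
  have hsym : ∫ t in Iic (0:ℝ), f t = ∫ t in Ioi (0:ℝ), f t := by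
    have := integral_comp_neg_Iic (0:ℝ) f
    simp only [neg_zero] at this
    rw [← this]
    exact setIntegral_congr_fun measurableSet_Iic fun t _ => (f_even t).symm
  have hsplit : (∫ t in Iic (0:ℝ), f t) + ∫ t in Ioi (0:ℝ), f t = 1 := by
    rw [← f_total, ← setIntegral_union (Iic_disjoint_Ioi le_rfl) measurableSet_Ioi
      f_int.integrableOn f_int.integrableOn, Iic_union_Ioi, setIntegral_univ]
  linarith [hsym, hsplit]

lemma f_Ioi_zero : ∫ t in Ioi (0:ℝ), f t = 1/2 := by
  have hsplit : (∫ t in Iic (0:ℝ), f t) + ∫ t in Ioi (0:ℝ), f t = 1 := by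
    rw [← f_total, ← setIntegral_union (Iic_disjoint_Ioi le_rfl) measurableSet_Ioi
      f_int.integrableOn f_int.integrableOn, Iic_union_Ioi, setIntegral_univ]
  have := f_Iic_zero
  linarith

/-- Splitting: `Φ(b) = Φ(a) + ∫_{(a,b]} f`. -/
lemma f_split {a b : ℝ} (h : a ≤ b) :
    ∫ t in Iic b, f t = (∫ t in Iic a, f t) + ∫ t in Ioc a b, f t := by
  rw [← setIntegral_union ((Iic_disjoint_Ioi le_rfl).mono_right Ioc_subset_Ioi_self)
    measurableSet_Ioc f_int.integrableOn f_int.integrableOn, Iic_union_Ioc_eq_Iic h]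

lemma f_Ioc_pos {a b : ℝ} (h : a < b) : 0 < ∫ t in Ioc a b, f t := by
  rw [setIntegral_pos_iff_support_of_nonneg_ae
    (Filter.Eventually.of_forall fun t => (f_pos t).le) f_int.integrableOn]
  have hs : Function.support f ∩ Ioc a b = Ioc a b := by
    rw [Set.inter_eq_right]
    intro t _
    exact Function.mem_support.mpr (f_pos t).ne'
  rw [hs]
  simp [Real.volume_Ioc, h]

lemma gaussCDF_strict {a b : ℝ} (h : a < b) : gaussCDF a < gaussCDF b := by
  have := f_split h.le
  have hpos := f_Ioc_pos h
  simp only [gaussCDF]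
  show (∫ t in Iic a, f t) < ∫ t in Iic b, f t
  linarith

lemma gaussCDF_zero : gaussCDF 0 = 1/2 := f_Iic_zero

/-- Gaussian tail bound: `Φ(-a) ≤ e^{-a²/2}/2` for `a ≥ 0`. -/
lemma tail_bound {a : ℝ} (ha : 0 ≤ a) : gaussCDF (-a) ≤ Real.exp (-a^2/2) / 2 := by
  have hsym : gaussCDF (-a) = ∫ t in Ioi a, f t := by
    have := integral_comp_neg_Iic (-a) f
    rw [neg_neg] at this
    rw [← this]
    exact setIntegral_congr_fun measurableSet_Iic fun t _ => (f_even t).symm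
  -- translated Gaussian
  set g : ℝ → ℝ := fun t => f (t - a) with hg
  have hgint : Integrable g := f_int.comp_sub_right a
  have hmono : ∫ t in Ioi a, f t ≤ ∫ t in Ioi a, Real.exp (-a^2/2) * g t := by
    refine setIntegral_mono_on f_int.integrableOn ((hgint.const_mul _).integrableOn)
      measurableSet_Ioi fun t ht => ?_
    simp only [hg, f, div_eq_mul_inv, ← mul_assoc, ← Real.exp_add]
    have : -t^2/2 ≤ -a^2/2 + (-(t-a)^2/2) := by nlinarith [le_of_lt (mem_Ioi.mp ht), ha]
    exact mul_le_mul_of_nonneg_right (Real.exp_le_exp.mpr this) (inv_nonneg.mpr sqrt_pos.le)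
  have htrans : ∫ t in Ioi a, g t = 1/2 := by
    have hmp : MeasurePreserving (fun x : ℝ => x + a) volume volume :=
      measurePreserving_add_right volume a
    have hemb : MeasurableEmbedding (fun x : ℝ => x + a) :=
      (Homeomorph.addRight a).isClosedEmbedding.measurableEmbedding
    have := hmp.setIntegral_preimage_emb hemb g (Ioi a)
    rw [preimage_add_const_Ioi, sub_self] at this
    rw [← this]
    have : ∀ x : ℝ, g (x + a) = f x := by intro x; simp [hg]
    simp_rw [this]
    exact f_Ioi_zero
  have : ∫ t in Ioi a, Real.exp (-a^2/2) * g t = Real.exp (-a^2/2) / 2 := by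
    rw [integral_const_mul, htrans]
    ring
  rw [hsym]
  linarith [hmono, this]

end GaussAux

/-- For `ε ∈ (0, 1/2]`, any `x` with `Φ(x) = ε` (i.e. `x = Φ⁻¹(ε)`) satisfies
`|Φ⁻¹(ε)| ≤ 2·√(log₂(1/(2ε)))`. -/
theorem abs_gaussCDF_inv_le (ε x : ℝ) (hε : 0 < ε) (hε' : ε ≤ 1 / 2)
    (hx : gaussCDF x = ε) :
    |x| ≤ 2 * Real.sqrt (Real.logb 2 (1 / (2 * ε))) := by
  set L := Real.logb 2 (1 / (2 * ε)) with hLdef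
  have h2ε : 0 < 2 * ε := by linarith
  have h2ε1 : 2 * ε ≤ 1 := by linarith
  have hL : 0 ≤ L := Real.logb_nonneg one_lt_two (by
    rw [le_div_iff₀ h2ε]; linarith)
  set a := 2 * Real.sqrt L with hadef
  have ha : 0 ≤ a := by positivity
  -- x ≤ 0
  have hx0 : x ≤ 0 := by
    by_contra h
    push_neg at h
    have := GaussAux.gaussCDF_strict h
    rw [GaussAux.gaussCDF_zero, hx] at this
    linarith
  -- key: e^{-a²/2}/2 ≤ ε
  have hkey : Real.exp (-a^2/2) / 2 ≤ ε := by
    have hsq : a^2 = 4 * L := by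
      rw [hadef, mul_pow, Real.sq_sqrt hL]; ring
    have hlog2 : (0:ℝ) < Real.log 2 := Real.log_pos one_lt_two
    have hlog2' : Real.log 2 ≤ 1 := by
      have := Real.log_le_sub_one_of_pos (by norm_num : (0:ℝ) < 2)
      linarith
    have hc : Real.log (2 * ε) ≤ 0 := Real.log_nonpos h2ε.le h2ε1
    have hLeq : L = -Real.log (2 * ε) / Real.log 2 := by
      rw [hLdef, Real.logb, one_div, Real.log_inv]
    have harg : -a^2/2 ≤ Real.log (2 * ε) := by
      rw [hsq, hLeq]
      rw [show -(4 * (-Real.log (2*ε) / Real.log 2))/2 = 2*Real.log (2*ε)/Real.log 2 by ring,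
        div_le_iff₀ hlog2]
      nlinarith
    calc Real.exp (-a^2/2) / 2 ≤ Real.exp (Real.log (2*ε)) / 2 := by
          have := Real.exp_le_exp.mpr harg
          linarith
      _ = ε := by rw [Real.exp_log h2ε]; ring
  -- -a ≤ x
  have hax : -a ≤ x := by
    by_contra h
    push_neg at h
    have h1 := GaussAux.gaussCDF_strict h
    have h2 := GaussAux.tail_bound ha
    rw [hx] at h1
    linarith
  rw [abs_of_nonpos hx0]
  rw [hadef] at hax ⊢
  linarith
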